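/- arXiv:1306.0625 — 2 statements merged into one kernel-verified Lean document; each statement's English description precedes it below -/
import Mathlib

section
/- Fix A > 0 and B > 0 and let Γ^A_B be the collection of convex bodies Ω ⊂ ℝ^{n+1} with 0 ∈ Ω, V(Ω) ≥ B and E(Ω) ≤ A. If Ω_k ∈ Γ^A_B is a sequence converging in the Hausdorff metric to a convex body Ω₀, then lim_{k→∞} E(Ω_k) = E(Ω₀). -/
open MeasureTheory Metric Set Filter
open scoped RealInnerProductSpace Topology

noncomputable section
set_option maxHeartbeats 1000000

abbrev Eu (n : ℕ) := EuclideanSpace ℝ (Fin (n+1))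

/-- Support function of `Ω` with respect to the point `z₀`. -/
def suppFn (n : ℕ) (Ω : Set (Eu n)) (z₀ x : Eu n) : ℝ :=
  sSup ((fun z => ⟪x, z - z₀⟫) '' Ω)

/-- The unit sphere `𝕊ⁿ ⊂ ℝ^{n+1}`. -/
def sph (n : ℕ) : Set (Eu n) := sphere (0 : Eu n) 1

/-- The surface measure on `ℝ^{n+1}` (n-dimensional Hausdorff measure). -/
def sphMeasure (n : ℕ) : Measure (Eu n) := μH[(n : ℝ)]

/-- `ω_n`, the surface area of `𝕊ⁿ`. -/
def omegaN (n : ℕ) : ℝ := (sphMeasure n (sph n)).toReal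

/-- `(1/ω_n) ∫_{𝕊ⁿ} log u_{z₀}`. -/
def entropyIntegral (n : ℕ) (Ω : Set (Eu n)) (z₀ : Eu n) : ℝ :=
  (1 / omegaN n) * ∫ x in sph n, Real.log (suppFn n Ω z₀ x) ∂(sphMeasure n)

/-- The entropy `E(Ω)`: sup over points with positive support function. -/
def entropy (n : ℕ) (Ω : Set (Eu n)) : ℝ :=
  sSup { r | ∃ z₀ ∈ Ω, (∀ x ∈ sph n, 0 < suppFn n Ω z₀ x) ∧ r = entropyIntegral n Ω z₀ }

/-- The polar dual translated to the origin: `Ω*_{z₀} - z₀`. -/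
def polarDual0 (n : ℕ) (Ω : Set (Eu n)) (z₀ : Eu n) : Set (Eu n) :=
  {y | ∀ z ∈ Ω, ⟪y, z - z₀⟫ ≤ 1}

/-- The polar dual of `Ω` with respect to `z₀`. -/
def polarDual (n : ℕ) (Ω : Set (Eu n)) (z₀ : Eu n) : Set (Eu n) :=
  (fun y => z₀ + y) '' polarDual0 n Ω z₀

/-- A convex body: compact convex with nonempty interior. -/
def IsConvexBody (n : ℕ) (Ω : Set (Eu n)) : Prop :=
  Convex ℝ Ω ∧ IsCompact Ω ∧ (interior Ω).Nonempty

/-- The Santaló point: interior point minimizing the volume of the polar dual. -/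
def IsSantaloPoint (n : ℕ) (Ω : Set (Eu n)) (zs : Eu n) : Prop :=
  zs ∈ interior Ω ∧ ∀ z₀ ∈ interior Ω, volume (polarDual n Ω zs) ≤ volume (polarDual n Ω z₀)

/-- The entropy point: a point of `Ω` where the entropy supremum is attained. -/
def IsEntropyPoint (n : ℕ) (Ω : Set (Eu n)) (ze : Eu n) : Prop :=
  ze ∈ Ω ∧ entropy n Ω = entropyIntegral n Ω ze

/-- The closed unit ball `B(1) ⊂ ℝ^{n+1}`. -/
def unitBall (n : ℕ) : Set (Eu n) := closedBall (0 : Eu n) 1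

namespace EntropyAux

variable {n : ℕ}

lemma sph_compact : IsCompact (sph n) := isCompact_sphere 0 1

lemma sph_nonempty : (sph n).Nonempty := NormedSpace.sphere_nonempty.mpr zero_le_one

lemma sph_measurable : MeasurableSet (sph n) := (isClosed_sphere).measurableSet

lemma norm_of_mem_sph {x : Eu n} (hx : x ∈ sph n) : ‖x‖ = 1 :=
  mem_sphere_zero_iff_norm.mp hx

lemma suppFn_max {Ω : Set (Eu n)} (hc : IsCompact Ω) (hne : Ω.Nonempty) (z x : Eu n) :
    ∃ w ∈ Ω, suppFn n Ω z x = ⟪x, w - z⟫ ∧ ∀ v ∈ Ω, ⟪x, v - z⟫ ≤ suppFn n Ω z x := by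
  have hf : Continuous fun w : Eu n => ⟪x, w - z⟫ :=
    continuous_const.inner (continuous_id.sub continuous_const)
  obtain ⟨w, hwΩ, hw⟩ := hc.exists_isMaxOn hne hf.continuousOn
  have hgr : IsGreatest ((fun w : Eu n => ⟪x, w - z⟫) '' Ω) ⟪x, w - z⟫ :=
    ⟨⟨w, hwΩ, rfl⟩, by rintro y ⟨v, hv, rfl⟩; exact hw hv⟩
  have hs : suppFn n Ω z x = ⟪x, w - z⟫ := hgr.csSup_eq
  exact ⟨w, hwΩ, hs, fun v hv => hs ▸ hw hv⟩

lemma le_suppFn {Ω : Set (Eu n)} (hc : IsCompact Ω) {w : Eu n} (hw : w ∈ Ω) {z x : Eu n} :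
    ⟪x, w - z⟫ ≤ suppFn n Ω z x := by
  obtain ⟨w', -, -, h⟩ := suppFn_max hc ⟨w, hw⟩ z x
  exact h w hw

lemma suppFn_le {Ω : Set (Eu n)} (hne : Ω.Nonempty) {z x : Eu n} {M : ℝ}
    (h : ∀ w ∈ Ω, ⟪x, w - z⟫ ≤ M) : suppFn n Ω z x ≤ M := by
  refine csSup_le (hne.image _) ?_
  rintro y ⟨v, hv, rfl⟩
  exact h v hv

lemma suppFn_nonneg {Ω : Set (Eu n)} (hc : IsCompact Ω) {z : Eu n} (hz : z ∈ Ω) (x : Eu n) :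
    0 ≤ suppFn n Ω z x := by
  have := le_suppFn hc hz (z := z) (x := x)
  simpa using this

lemma suppFn_shift {Ω : Set (Eu n)} (hc : IsCompact Ω) (hne : Ω.Nonempty) (z z' x : Eu n) :
    suppFn n Ω z x = suppFn n Ω z' x + ⟪x, z' - z⟫ := by
  have hle : ∀ a b : Eu n, suppFn n Ω a x ≤ suppFn n Ω b x + ⟪x, b - a⟫ := by
    intro a b
    obtain ⟨w, hwΩ, hw, -⟩ := suppFn_max hc hne a x
    have h1 : ⟪x, w - a⟫ = ⟪x, w - b⟫ + ⟪x, b - a⟫ := by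
      rw [← inner_add_right, sub_add_sub_cancel]
    have h2 := le_suppFn hc hwΩ (z := b) (x := x)
    rw [hw, h1]
    linarith
  have h1 := hle z z'
  have h2 := hle z' z
  have h3 : ⟪x, z - z'⟫ = -⟪x, z' - z⟫ := by
    rw [← inner_neg_right, neg_sub]
  rw [h3] at h2
  linarith

lemma suppFn_continuous {Ω : Set (Eu n)} (hc : IsCompact Ω) (hne : Ω.Nonempty) (z : Eu n) :
    Continuous (suppFn n Ω z) := by
  obtain ⟨C, hC⟩ : ∃ C, ∀ w ∈ Ω, ‖w - z‖ ≤ C := by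
    obtain ⟨r, hr⟩ := hc.isBounded.subset_closedBall z
    exact ⟨r, fun w hw => by simpa [mem_closedBall, dist_eq_norm] using hr hw⟩
  have key : ∀ x y : Eu n, suppFn n Ω z x - suppFn n Ω z y ≤ max C 0 * ‖x - y‖ := by
    intro x y
    obtain ⟨w, hwΩ, hw, -⟩ := suppFn_max hc hne z x
    have h1 : ⟪x, w - z⟫ = ⟪y, w - z⟫ + ⟪x - y, w - z⟫ := by
      rw [inner_sub_left]; ring
    have h2 := le_suppFn hc hwΩ (z := z) (x := y)
    have h3 := real_inner_le_norm (x - y) (w - z)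
    have h4 : ‖x - y‖ * ‖w - z‖ ≤ max C 0 * ‖x - y‖ := by
      have h5 := hC w hwΩ
      have h6 : ‖w - z‖ ≤ max C 0 := le_trans h5 (le_max_left _ _)
      have h7 : (0:ℝ) ≤ ‖x - y‖ := norm_nonneg _
      have h8 := mul_le_mul_of_nonneg_left h6 h7
      linarith
    rw [hw, h1]
    linarith
  have hlip : LipschitzWith ⟨max C 0, le_max_right _ _⟩ (suppFn n Ω z) := by
    apply LipschitzWith.of_dist_le_mul
    intro x y
    rw [Real.dist_eq, abs_sub_le_iff, dist_eq_norm]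
    constructor
    · exact key x y
    · have := key y x
      rwa [norm_sub_rev] at this
  exact hlip.continuous

lemma suppFn_le_near {Ω Ω' : Set (Eu n)} (hc : IsCompact Ω) (hne : Ω.Nonempty)
    (hc' : IsCompact Ω') {ε : ℝ} (h : ∀ w ∈ Ω, ∃ w' ∈ Ω', dist w w' ≤ ε)
    {z x : Eu n} (hx : ‖x‖ ≤ 1) :
    suppFn n Ω z x ≤ suppFn n Ω' z x + ε := by
  obtain ⟨w, hwΩ, hw, -⟩ := suppFn_max hc hne z x
  obtain ⟨w', hw'Ω', hww'⟩ := h w hwΩ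
  have h1 : ⟪x, w - z⟫ = ⟪x, w - w'⟫ + ⟪x, w' - z⟫ := by
    rw [← inner_add_right, sub_add_sub_cancel]
  have h2 := le_suppFn hc' hw'Ω' (z := z) (x := x)
  have h3 := real_inner_le_norm x (w - w')
  have h4 : ‖w - w'‖ ≤ ε := by rwa [← dist_eq_norm]
  have h5 : ‖x‖ * ‖w - w'‖ ≤ ε := by
    have h6 : (0:ℝ) ≤ ‖w - w'‖ := norm_nonneg _
    have h7 := mul_le_mul_of_nonneg_right hx h6
    rw [one_mul] at h7
    linarith
  rw [hw, h1]
  linarith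

lemma mem_of_suppFn_pos {Ω : Set (Eu n)} (hconv : Convex ℝ Ω) (hc : IsCompact Ω)
    (hne : Ω.Nonempty) {z : Eu n} (hpos : ∀ x ∈ sph n, 0 < suppFn n Ω z x) : z ∈ Ω := by
  by_contra hz
  obtain ⟨f, u, hfu, hfz⟩ := geometric_hahn_banach_closed_point hconv hc.isClosed hz
  obtain ⟨v, hv⟩ := (InnerProductSpace.toDual ℝ (Eu n)).surjective f
  have hvz : ∀ w : Eu n, f w = ⟪v, w⟫ := fun w => by
    rw [← hv]; exact InnerProductSpace.toDual_apply_apply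
  have hvne : v ≠ 0 := by
    rintro rfl
    obtain ⟨w, hw⟩ := hne
    have h1 := hfu w hw
    rw [hvz] at h1 hfz
    simp only [inner_zero_left] at h1 hfz
    linarith
  set x₀ : Eu n := ‖v‖⁻¹ • v with hx₀def
  have hx₀ : ‖x₀‖ = 1 := by
    rw [hx₀def]
    exact norm_smul_inv_norm (𝕜 := ℝ) hvne
  have hx₀S : x₀ ∈ sph n := mem_sphere_zero_iff_norm.mpr hx₀
  have hvpos : (0:ℝ) < ‖v‖⁻¹ := inv_pos.mpr (norm_pos_iff.mpr hvne)
  have hub : suppFn n Ω z x₀ ≤ ‖v‖⁻¹ * (u - f z) := by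
    refine suppFn_le hne (fun w hw => ?_)
    have h1 : ⟪x₀, w - z⟫ = ‖v‖⁻¹ * (f w - f z) := by
      rw [hx₀def, real_inner_smul_left, inner_sub_right, hvz, hvz]
    rw [h1]
    have h2 : f w - f z ≤ u - f z := by have := hfu w hw; linarith
    exact mul_le_mul_of_nonneg_left h2 hvpos.le
  have hneg : ‖v‖⁻¹ * (u - f z) < 0 :=
    mul_neg_of_pos_of_neg hvpos (by linarith)
  have := hpos x₀ hx₀S
  linarith

lemma integrable_log (hμ : sphMeasure n (sph n) ≠ ⊤) {g : Eu n → ℝ} (hg : Continuous g)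
    (hpos : ∀ x ∈ sph n, 0 < g x) :
    IntegrableOn (fun x => Real.log (g x)) (sph n) (sphMeasure n) := by
  haveI : IsFiniteMeasure ((sphMeasure n).restrict (sph n)) :=
    ⟨by rw [Measure.restrict_apply_univ]; exact Ne.lt_top hμ⟩
  obtain ⟨x₁, hx₁S, hmin⟩ := sph_compact.exists_isMinOn sph_nonempty hg.continuousOn
  obtain ⟨x₂, hx₂S, hmax⟩ := sph_compact.exists_isMaxOn sph_nonempty hg.continuousOn
  set C := max |Real.log (g x₁)| |Real.log (g x₂)| with hCdef
  have hbound : ∀ x ∈ sph n, ‖Real.log (g x)‖ ≤ C := by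
    intro x hx
    have h1 : Real.log (g x₁) ≤ Real.log (g x) :=
      Real.log_le_log (hpos x₁ hx₁S) (hmin hx)
    have h2 : Real.log (g x) ≤ Real.log (g x₂) :=
      Real.log_le_log (hpos x hx) (hmax hx)
    rw [Real.norm_eq_abs, abs_le]
    constructor
    · have := neg_abs_le (Real.log (g x₁))
      have := le_max_left |Real.log (g x₁)| |Real.log (g x₂)|
      linarith
    · have := le_abs_self (Real.log (g x₂))
      have := le_max_right |Real.log (g x₁)| |Real.log (g x₂)|
      linarith
  refine Integrable.mono' (integrable_const C)
    ((Real.measurable_log.comp hg.measurable).aestronglyMeasurable) ?_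
  exact (ae_restrict_iff' sph_measurable).2 (ae_of_all _ hbound)

def entSet (n : ℕ) (Ω : Set (Eu n)) : Set ℝ :=
  { r | ∃ z₀ ∈ Ω, (∀ x ∈ sph n, 0 < suppFn n Ω z₀ x) ∧ r = entropyIntegral n Ω z₀ }

lemma entropy_eq (n : ℕ) (Ω : Set (Eu n)) : entropy n Ω = sSup (entSet n Ω) := rfl

lemma one_div_mul_cancel_le {m a : ℝ} (hm : 0 ≤ m) (ha : 0 ≤ a) : (1/m) * (m * a) ≤ a := by
  rcases eq_or_lt_of_le hm with h | h
  · simp [← h, ha]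
  · rw [one_div, inv_mul_cancel_left₀ h.ne']

lemma entSet_bddAbove (hμ : sphMeasure n (sph n) ≠ ⊤) {Ω : Set (Eu n)} (hc : IsCompact Ω)
    {R : ℝ} (hR : Ω ⊆ closedBall 0 R) : BddAbove (entSet n Ω) := by
  refine ⟨Real.log (max (2*R) 1), ?_⟩
  rintro r ⟨z, hz, hpos, rfl⟩
  have hne : Ω.Nonempty := ⟨z, hz⟩
  have hRz : ‖z‖ ≤ R := mem_closedBall_zero_iff.mp (hR hz)
  set M := max (2*R) 1 with hM
  have hM1 : (1:ℝ) ≤ M := le_max_right _ _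
  have hsup : ∀ x ∈ sph n, suppFn n Ω z x ≤ M := by
    intro x hx
    refine suppFn_le hne (fun w hw => ?_)
    have h1 := real_inner_le_norm x (w - z)
    have h2 : ‖w - z‖ ≤ 2*R := by
      have h3 := mem_closedBall_zero_iff.mp (hR hw)
      calc ‖w - z‖ ≤ ‖w‖ + ‖z‖ := norm_sub_le _ _
      _ ≤ 2*R := by linarith
    have hx1 : ‖x‖ = 1 := norm_of_mem_sph hx
    calc ⟪x, w - z⟫ ≤ ‖x‖ * ‖w - z‖ := h1
    _ = ‖w - z‖ := by rw [hx1, one_mul]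
    _ ≤ 2*R := h2
    _ ≤ M := le_max_left _ _
  have hint := integrable_log hμ (suppFn_continuous hc hne z) hpos
  have hlog : ∀ x ∈ sph n, Real.log (suppFn n Ω z x) ≤ Real.log M := fun x hx =>
    Real.log_le_log (hpos x hx) (hsup x hx)
  have hmono := setIntegral_mono_on hint (integrableOn_const hμ)
    sph_measurable hlog
  rw [setIntegral_const, smul_eq_mul] at hmono
  have hωnn : 0 ≤ omegaN n := ENNReal.toReal_nonneg
  have hlogM : 0 ≤ Real.log M := Real.log_nonneg hM1
  have hmm : (sphMeasure n (sph n)).toReal = omegaN n := rfl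
  rw [measureReal_def, hmm] at hmono
  unfold entropyIntegral
  calc (1 / omegaN n) * ∫ x in sph n, Real.log (suppFn n Ω z x) ∂(sphMeasure n)
      ≤ (1 / omegaN n) * (omegaN n * Real.log M) := by
        apply mul_le_mul_of_nonneg_left hmono (by positivity)
    _ ≤ Real.log M := one_div_mul_cancel_le hωnn hlogM

lemma entSet_nonempty {Ω : Set (Eu n)} (hb : IsConvexBody n Ω) : (entSet n Ω).Nonempty := by
  obtain ⟨p, hp⟩ := hb.2.2
  obtain ⟨r, hr0, hball⟩ := Metric.mem_nhds_iff.mp (mem_interior_iff_mem_nhds.mp hp)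
  have hpΩ : p ∈ Ω := interior_subset hp
  have hpos : ∀ x ∈ sph n, 0 < suppFn n Ω p x := by
    intro x hx
    have hx1 : ‖x‖ = 1 := norm_of_mem_sph hx
    have hmem : p + (r/2) • x ∈ Ω := by
      apply hball
      rw [mem_ball, dist_eq_norm, add_sub_cancel_left, norm_smul, hx1, mul_one,
        Real.norm_eq_abs, abs_of_pos (by positivity)]
      linarith
    have h1 := le_suppFn hb.2.1 hmem (z := p) (x := x)
    rw [add_sub_cancel_left, real_inner_smul_right, real_inner_self_eq_norm_mul_norm, hx1] at h1
    have : (0:ℝ) < r/2 := by positivity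
    linarith
  exact ⟨entropyIntegral n Ω p, p, hpΩ, hpos, rfl⟩

lemma le_entropy (hμ : sphMeasure n (sph n) ≠ ⊤) {Ω : Set (Eu n)} (hc : IsCompact Ω)
    {R : ℝ} (hR : Ω ⊆ closedBall 0 R) {z : Eu n} (hz : z ∈ Ω)
    (hpos : ∀ x ∈ sph n, 0 < suppFn n Ω z x) :
    entropyIntegral n Ω z ≤ entropy n Ω :=
  le_csSup (entSet_bddAbove hμ hc hR) ⟨z, hz, hpos, rfl⟩

lemma entropy_le {Ω : Set (Eu n)} (hb : IsConvexBody n Ω) {M : ℝ}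
    (h : ∀ z ∈ Ω, (∀ x ∈ sph n, 0 < suppFn n Ω z x) → entropyIntegral n Ω z ≤ M) :
    entropy n Ω ≤ M := by
  rw [entropy_eq]
  refine csSup_le (entSet_nonempty hb) ?_
  rintro r ⟨z, hz, hpos, rfl⟩
  exact h z hz hpos

lemma entropy_eq_zero_of_top (hμ : sphMeasure n (sph n) = ⊤) {Ω : Set (Eu n)}
    (hb : IsConvexBody n Ω) : entropy n Ω = 0 := by
  have hω : omegaN n = 0 := by unfold omegaN; rw [hμ]; simp
  have hall : ∀ r ∈ entSet n Ω, r = 0 := by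
    rintro r ⟨z, hz, hpos, rfl⟩
    unfold entropyIntegral
    rw [hω]
    simp
  obtain ⟨r, hr⟩ := entSet_nonempty hb
  have hset : entSet n Ω = {0} := by
    apply Set.eq_singleton_iff_nonempty_unique_mem.mpr
    exact ⟨⟨r, hr⟩, hall⟩
  rw [entropy_eq, hset, csSup_singleton]

lemma log_add_le {x e : ℝ} (hx : 0 < x) (he : 0 ≤ e) :
    Real.log (x + e) ≤ Real.log x + e / x := by
  have hxe : 0 < x + e := by linarith
  have h1 : Real.log (x + e) - Real.log x = Real.log ((x+e)/x) :=
    (Real.log_div hxe.ne' hx.ne').symm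
  have h2 : Real.log ((x+e)/x) ≤ (x+e)/x - 1 := Real.log_le_sub_one_of_pos (by positivity)
  have h3 : (x+e)/x - 1 = e/x := by field_simp; ring
  linarith

lemma log_concave_ineq {a b t : ℝ} (ha : 0 < a) (hb : 0 < b) (ht0 : 0 ≤ t) (ht1 : t ≤ 1) :
    (1 - t) * Real.log a + t * Real.log b ≤ Real.log ((1-t)*a + t*b) := by
  have h := (strictConcaveOn_log_Ioi.concaveOn).2 (Set.mem_Ioi.mpr ha) (Set.mem_Ioi.mpr hb)
    (by linarith : (0:ℝ) ≤ 1 - t) ht0 (by ring)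
  simpa [smul_eq_mul] using h

end EntropyAux

open EntropyAux

-- STATEMENT 16
theorem entropy_continuous_along_hausdorff (n : ℕ) (hn : 1 ≤ n) (A B : ℝ)
    (hA : 0 < A) (hB : 0 < B) (Ωseq : ℕ → Set (Eu n)) (Ω₀ : Set (Eu n))
    (hbody : ∀ k, IsConvexBody n (Ωseq k)) (h0 : ∀ k, (0 : Eu n) ∈ Ωseq k)
    (hVol : ∀ k, B ≤ (volume (Ωseq k)).toReal) (hEnt : ∀ k, entropy n (Ωseq k) ≤ A)
    (hbody0 : IsConvexBody n Ω₀)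
    (hconv : Tendsto (fun k => Metric.hausdorffDist (Ωseq k) Ω₀) atTop (𝓝 0)) :
    Tendsto (fun k => entropy n (Ωseq k)) atTop (𝓝 (entropy n Ω₀)) := by
  classical
  by_cases hμ : sphMeasure n (sph n) = ⊤
  · have h0' : ∀ k, entropy n (Ωseq k) = 0 := fun k => entropy_eq_zero_of_top hμ (hbody k)
    have h0'' : entropy n Ω₀ = 0 := entropy_eq_zero_of_top hμ hbody0
    simp only [h0', h0'']
    exact tendsto_const_nhds
  have hcomp₀ := hbody0.2.1
  have hconv₀ := hbody0.1
  have hne₀ : Ω₀.Nonempty := hbody0.2.2.mono interior_subset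
  obtain ⟨R₀, hR₀⟩ := hcomp₀.isBounded.subset_closedBall (0 : Eu n)
  have hR₀0 : 0 ≤ R₀ := by
    obtain ⟨w, hw⟩ := hne₀
    have h1 := mem_closedBall_zero_iff.mp (hR₀ hw)
    have h2 : (0:ℝ) ≤ ‖w‖ := norm_nonneg _
    linarith
  set R := R₀ + 1 with hRdef
  -- inner point
  obtain ⟨p, hpint⟩ := hbody0.2.2
  obtain ⟨r₀, hr₀pos, hball⟩ := Metric.mem_nhds_iff.mp (mem_interior_iff_mem_nhds.mp hpint)
  have hpΩ₀ : p ∈ Ω₀ := interior_subset hpint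
  set ρ := r₀ / 2 with hρdef
  have hρpos : 0 < ρ := by positivity
  have hρsup : ∀ x ∈ sph n, ρ ≤ suppFn n Ω₀ p x := by
    intro x hx
    have hx1 : ‖x‖ = 1 := norm_of_mem_sph hx
    have hmem : p + ρ • x ∈ Ω₀ := by
      apply hball
      rw [mem_ball, dist_eq_norm, add_sub_cancel_left, norm_smul, hx1, mul_one,
        Real.norm_eq_abs, abs_of_pos hρpos]
      rw [hρdef]; linarith
    have h1 := le_suppFn hcomp₀ hmem (z := p) (x := x)
    rw [add_sub_cancel_left, real_inner_smul_right, real_inner_self_eq_norm_mul_norm, hx1] at h1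
    linarith
  set E₀ := entropy n Ω₀ with hE₀def
  rw [Metric.tendsto_nhds]
  intro ε hε
  -- near maximizer z₁ of entropy of Ω₀
  have hlt : E₀ - ε/2 < sSup (entSet n Ω₀) := by
    rw [← entropy_eq, ← hE₀def]; linarith
  obtain ⟨s₁, hs₁mem, hs₁⟩ := exists_lt_of_lt_csSup (entSet_nonempty hbody0) hlt
  obtain ⟨z₁, hz₁Ω₀, hpos₁, rfl⟩ := hs₁mem
  -- δ : min of suppFn Ω₀ z₁ on the sphere
  obtain ⟨x₁, hx₁S, hx₁min⟩ := sph_compact.exists_isMinOn sph_nonempty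
    (suppFn_continuous hcomp₀ hne₀ z₁).continuousOn
  set δ := suppFn n Ω₀ z₁ x₁ with hδdef
  have hδpos : 0 < δ := hpos₁ x₁ hx₁S
  have hδle : ∀ x ∈ sph n, δ ≤ suppFn n Ω₀ z₁ x := fun x hx => hx₁min hx
  -- parameters
  set D := |Real.log ρ| + |E₀| + ε with hDdef
  have hDpos : 0 < D := by positivity
  set t := min (1/2) (ε / (8 * D)) with htdef
  have ht0 : 0 < t := lt_min (by norm_num) (by positivity)
  have hthalf : t ≤ 1/2 := min_le_left _ _
  have ht1 : t < 1 := lt_of_le_of_lt hthalf (by norm_num)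
  have h1t : 0 < 1 - t := by linarith
  have htD : t * D ≤ ε / 8 := by
    have h1 : t ≤ ε / (8*D) := min_le_right _ _
    calc t * D ≤ (ε / (8*D)) * D := mul_le_mul_of_nonneg_right h1 hDpos.le
    _ = ε/8 := by field_simp
  set ε₂ := t * ρ * ε / 16 with hε₂def
  have hε₂pos : 0 < ε₂ := by positivity
  set ε₁ := min (δ/2) (δ * ε/8) with hε₁def
  have hε₁pos : 0 < ε₁ := lt_min (by positivity) (by positivity)
  set ε' := min 1 (min ε₁ ε₂) with hε'def
  have hε'pos : 0 < ε' := lt_min one_pos (lt_min hε₁pos hε₂pos)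
  filter_upwards [Metric.tendsto_nhds.mp hconv ε' hε'pos] with k hk
  -- basic facts about Ωk
  have hck := (hbody k).2.1
  have hconvk := (hbody k).1
  have hnek : (Ωseq k).Nonempty := ⟨0, h0 k⟩
  have hd : hausdorffDist (Ωseq k) Ω₀ ≤ ε' := by
    rw [Real.dist_eq, sub_zero, abs_of_nonneg hausdorffDist_nonneg] at hk
    exact hk.le
  have hedist : EMetric.hausdorffEdist (Ωseq k) Ω₀ ≠ ⊤ :=
    hausdorffEdist_ne_top_of_nonempty_of_bounded hnek hne₀ hck.isBounded hcomp₀.isBounded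
  have happrox₁ : ∀ w ∈ Ωseq k, ∃ w' ∈ Ω₀, dist w w' ≤ ε' := by
    intro w hw
    obtain ⟨w', hw'Ω₀, heq⟩ := hcomp₀.exists_infDist_eq_dist hne₀ w
    exact ⟨w', hw'Ω₀, by
      rw [← heq]
      exact le_trans (infDist_le_hausdorffDist_of_mem hw hedist) hd⟩
  have happrox₂ : ∀ w ∈ Ω₀, ∃ w' ∈ Ωseq k, dist w w' ≤ ε' := by
    intro w hw
    obtain ⟨w', hw'Ω, heq⟩ := hck.exists_infDist_eq_dist hnek w
    refine ⟨w', hw'Ω, ?_⟩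
    rw [← heq]
    refine le_trans (infDist_le_hausdorffDist_of_mem hw ?_) ?_
    · rwa [EMetric.hausdorffEdist_comm]
    · rwa [hausdorffDist_comm]
  have hε'1 : ε' ≤ 1 := min_le_left _ _
  have hRk : Ωseq k ⊆ closedBall 0 R := by
    intro w hw
    obtain ⟨w', hw'Ω₀, hdist⟩ := happrox₁ w hw
    have h1 : ‖w'‖ ≤ R₀ := mem_closedBall_zero_iff.mp (hR₀ hw'Ω₀)
    rw [mem_closedBall_zero_iff]
    have h2 : ‖w‖ - ‖w'‖ ≤ ‖w - w'‖ := norm_sub_norm_le _ _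
    have h3 : ‖w - w'‖ ≤ ε' := by rwa [← dist_eq_norm]
    rw [hRdef]; linarith
  have hωnn : 0 ≤ omegaN n := ENNReal.toReal_nonneg
  have hmm : (sphMeasure n (sph n)).toReal = omegaN n := rfl
  have hconstint : IntegrableOn (fun _ : Eu n => ε/4) (sph n) (sphMeasure n) :=
    integrableOn_const hμ
  -- ===== upper bound =====
  have hupper : entropy n (Ωseq k) ≤ E₀ + ε/2 := by
    refine entropy_le (hbody k) (fun z hzk hpos => ?_)
    obtain ⟨z', hz'Ω₀, hzz'⟩ := happrox₁ z hzk
    have hpt : ∀ x ∈ sph n, suppFn n (Ωseq k) z x ≤ suppFn n Ω₀ z' x + 2*ε₂ := by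
      intro x hx
      have hx1 : ‖x‖ = 1 := norm_of_mem_sph hx
      have h1 : suppFn n (Ωseq k) z x ≤ suppFn n Ω₀ z x + ε' :=
        suppFn_le_near hck hnek hcomp₀ happrox₁ (le_of_eq hx1)
      have h2 : suppFn n Ω₀ z x = suppFn n Ω₀ z' x + ⟪x, z' - z⟫ :=
        suppFn_shift hcomp₀ hne₀ z z' x
      have h3 : ⟪x, z' - z⟫ ≤ ε' := by
        have h4 := real_inner_le_norm x (z' - z)
        have h5 : ‖z' - z‖ ≤ ε' := by
          rw [← dist_eq_norm, dist_comm]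
          exact hzz'
        have h6 : (0:ℝ) ≤ ‖z' - z‖ := norm_nonneg _
        rw [hx1, one_mul] at h4
        linarith
      have hε'ε₂ : ε' ≤ ε₂ := le_trans (min_le_right _ _) (min_le_right _ _)
      linarith
    set w := (1-t) • z' + t • p with hwdef
    have hwΩ₀ : w ∈ Ω₀ := hconv₀ hz'Ω₀ hpΩ₀ (by linarith) ht0.le (by ring)
    have haff : ∀ x : Eu n, suppFn n Ω₀ w x
        = (1-t) * suppFn n Ω₀ z' x + t * suppFn n Ω₀ p x := by
      intro x
      have h1 := suppFn_shift hcomp₀ hne₀ w 0 x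
      have h2 := suppFn_shift hcomp₀ hne₀ z' 0 x
      have h3 := suppFn_shift hcomp₀ hne₀ p 0 x
      have hw' : ⟪x, w⟫ = (1-t) * ⟪x, z'⟫ + t * ⟪x, p⟫ := by
        rw [hwdef, inner_add_right, real_inner_smul_right, real_inner_smul_right]
      simp only [zero_sub, inner_neg_right] at h1 h2 h3
      rw [h1, h2, h3, hw']
      ring
    have hwpos : ∀ x ∈ sph n, t * ρ ≤ suppFn n Ω₀ w x := by
      intro x hx
      have h1 := suppFn_nonneg hcomp₀ hz'Ω₀ x
      have h2 := hρsup x hx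
      rw [haff x]
      have h3 := mul_nonneg h1t.le h1
      have h4 := mul_le_mul_of_nonneg_left h2 ht0.le
      linarith
    have hwpos' : ∀ x ∈ sph n, 0 < suppFn n Ω₀ w x :=
      fun x hx => lt_of_lt_of_le (by positivity) (hwpos x hx)
    set C' := ε/8 + t * |Real.log ρ| with hC'def
    have hC'0 : 0 ≤ C' := by positivity
    have hptlog : ∀ x ∈ sph n, Real.log (suppFn n (Ωseq k) z x)
        ≤ (1/(1-t)) * (Real.log (suppFn n Ω₀ w x) + C') := by
      intro x hx
      set a := suppFn n Ω₀ z' x + 2*ε₂ with hadef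
      set b := suppFn n Ω₀ p x + 2*ε₂ with hbdef
      have hz'nn := suppFn_nonneg hcomp₀ hz'Ω₀ x
      have ha : 0 < a := by rw [hadef]; linarith
      have hb : ρ ≤ b := by
        have := hρsup x hx
        rw [hbdef]; linarith
      have hbpos : 0 < b := lt_of_lt_of_le hρpos hb
      have hab : (1-t)*a + t*b = suppFn n Ω₀ w x + 2*ε₂ := by
        rw [haff x, hadef, hbdef]; ring
      have hL1 : Real.log (suppFn n (Ωseq k) z x) ≤ Real.log a :=
        Real.log_le_log (hpos x hx) (by have := hpt x hx; rw [hadef]; linarith)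
      have hL2 := log_concave_ineq ha hbpos ht0.le ht1.le
      rw [hab] at hL2
      have hX : t*ρ ≤ suppFn n Ω₀ w x := hwpos x hx
      have hXpos : 0 < suppFn n Ω₀ w x := hwpos' x hx
      have hL3 : Real.log (suppFn n Ω₀ w x + 2*ε₂)
          ≤ Real.log (suppFn n Ω₀ w x) + (2*ε₂)/(t*ρ) := by
        have h5 := log_add_le hXpos (by positivity : (0:ℝ) ≤ 2*ε₂)
        have h6 : (2*ε₂)/(suppFn n Ω₀ w x) ≤ (2*ε₂)/(t*ρ) := by
          apply div_le_div_of_nonneg_left (by positivity) (by positivity) hX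
        linarith
      have he2 : (2*ε₂)/(t*ρ) = ε/8 := by
        rw [hε₂def]
        field_simp
        ring
      rw [he2] at hL3
      have hL4 : Real.log ρ ≤ Real.log b := Real.log_le_log hρpos hb
      have h7 : -Real.log ρ ≤ |Real.log ρ| := neg_le_abs _
      have h8 : t * Real.log ρ ≤ t * Real.log b := mul_le_mul_of_nonneg_left hL4 ht0.le
      have h9 : t * (-Real.log ρ) ≤ t * |Real.log ρ| := mul_le_mul_of_nonneg_left h7 ht0.le
      have hcomb : (1-t) * Real.log a ≤ Real.log (suppFn n Ω₀ w x) + C' := by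
        rw [hC'def]; linarith
      have h10 : (1-t) * Real.log (suppFn n (Ωseq k) z x) ≤ (1-t) * Real.log a :=
        mul_le_mul_of_nonneg_left hL1 h1t.le
      have h11 : Real.log (suppFn n (Ωseq k) z x) * (1-t)
          ≤ Real.log (suppFn n Ω₀ w x) + C' := by linarith
      have h12 := (le_div_iff₀ h1t).mpr h11
      calc Real.log (suppFn n (Ωseq k) z x)
          ≤ (Real.log (suppFn n Ω₀ w x) + C') / (1-t) := h12
        _ = (1/(1-t)) * (Real.log (suppFn n Ω₀ w x) + C') := by ring
    have hint₁ : IntegrableOn (fun x => Real.log (suppFn n (Ωseq k) z x)) (sph n)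
        (sphMeasure n) := integrable_log hμ (suppFn_continuous hck hnek z) hpos
    have hint₂ : IntegrableOn (fun x => Real.log (suppFn n Ω₀ w x)) (sph n) (sphMeasure n) :=
      integrable_log hμ (suppFn_continuous hcomp₀ hne₀ w) hwpos'
    have hintC : IntegrableOn (fun _ : Eu n => C') (sph n) (sphMeasure n) :=
      integrableOn_const hμ
    have hint₃ : IntegrableOn (fun x => (1/(1-t)) * (Real.log (suppFn n Ω₀ w x) + C'))
        (sph n) (sphMeasure n) := (hint₂.add hintC).const_mul _
    have hI := setIntegral_mono_on hint₁ hint₃ sph_measurable hptlog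
    have hI2 : ∫ x in sph n, (1/(1-t)) * (Real.log (suppFn n Ω₀ w x) + C') ∂(sphMeasure n)
        = (1/(1-t)) * ((∫ x in sph n, Real.log (suppFn n Ω₀ w x) ∂(sphMeasure n))
          + omegaN n * C') := by
      rw [integral_const_mul, integral_add hint₂ hintC, setIntegral_const, smul_eq_mul, measureReal_def, hmm]
    rw [hI2] at hI
    have hEw : (1/omegaN n) * (∫ x in sph n, Real.log (suppFn n Ω₀ w x) ∂(sphMeasure n))
        ≤ E₀ := le_entropy hμ hcomp₀ hR₀ hwΩ₀ hwpos'
    have hmc : (1/omegaN n) * (omegaN n * C') ≤ C' := one_div_mul_cancel_le hωnn hC'0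
    have hfinal1 : entropyIntegral n (Ωseq k) z
        ≤ (1/(1-t)) * ((1/omegaN n)
            * (∫ x in sph n, Real.log (suppFn n Ω₀ w x) ∂(sphMeasure n))
          + (1/omegaN n) * (omegaN n * C')) := by
      unfold entropyIntegral
      have h13 := mul_le_mul_of_nonneg_left hI (by positivity : (0:ℝ) ≤ 1/omegaN n)
      calc (1 / omegaN n) * ∫ x in sph n, Real.log (suppFn n (Ωseq k) z x) ∂(sphMeasure n)
          ≤ (1/omegaN n) * ((1/(1-t))
              * ((∫ x in sph n, Real.log (suppFn n Ω₀ w x) ∂(sphMeasure n))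
                + omegaN n * C')) := h13
        _ = (1/(1-t)) * ((1/omegaN n)
              * (∫ x in sph n, Real.log (suppFn n Ω₀ w x) ∂(sphMeasure n))
            + (1/omegaN n) * (omegaN n * C')) := by ring
    have hfinal2 : entropyIntegral n (Ωseq k) z ≤ (1/(1-t)) * (E₀ + C') := by
      have h14 : (1/omegaN n) * (∫ x in sph n, Real.log (suppFn n Ω₀ w x) ∂(sphMeasure n))
          + (1/omegaN n) * (omegaN n * C') ≤ E₀ + C' := by linarith
      have h15 : (0:ℝ) ≤ 1/(1-t) := by positivity
      calc entropyIntegral n (Ωseq k) z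
          ≤ (1/(1-t)) * ((1/omegaN n)
              * (∫ x in sph n, Real.log (suppFn n Ω₀ w x) ∂(sphMeasure n))
            + (1/omegaN n) * (omegaN n * C')) := hfinal1
        _ ≤ (1/(1-t)) * (E₀ + C') := mul_le_mul_of_nonneg_left h14 h15
    have harith : (1/(1-t)) * (E₀ + C') ≤ E₀ + ε/2 := by
      have h2 : E₀ ≤ |E₀| := le_abs_self _
      have h4 : t * |Real.log ρ| + t * |E₀| + t * ε ≤ ε/8 := by
        have h5 : t * D = t*|Real.log ρ| + t*|E₀| + t*ε := by rw [hDdef]; ring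
        linarith
      have h5 : t * E₀ ≤ t * |E₀| := mul_le_mul_of_nonneg_left h2 ht0.le
      have h6 : t * (ε/2) ≤ t * ε := mul_le_mul_of_nonneg_left (by linarith) ht0.le
      have h7 : E₀ + C' ≤ (E₀ + ε/2) * (1-t) := by
        have hexp : (E₀ + ε/2) * (1-t) = E₀ + ε/2 - t*E₀ - t*(ε/2) := by ring
        rw [hexp, hC'def]
        linarith
      calc (1/(1-t)) * (E₀ + C') = (E₀ + C')/(1-t) := by ring
        _ ≤ E₀ + ε/2 := (div_le_iff₀ h1t).mpr (by linarith)
    linarith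
  -- ===== lower bound =====
  have hlower : E₀ - 3*ε/4 < entropy n (Ωseq k) := by
    have hε'₁ : ε' ≤ ε₁ := le_trans (min_le_right _ _) (min_le_left _ _)
    have hε'δ : ε' ≤ δ/2 := le_trans hε'₁ (min_le_left _ _)
    have hε'δε : ε' ≤ δ*ε/8 := le_trans hε'₁ (min_le_right _ _)
    have hnear : ∀ x ∈ sph n, suppFn n Ω₀ z₁ x ≤ suppFn n (Ωseq k) z₁ x + ε' := by
      intro x hx
      exact suppFn_le_near hcomp₀ hne₀ hck happrox₂ (le_of_eq (norm_of_mem_sph hx))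
    have hkpos : ∀ x ∈ sph n, δ/2 ≤ suppFn n (Ωseq k) z₁ x := by
      intro x hx
      have h1 := hnear x hx
      have h2 := hδle x hx
      linarith
    have hkpos' : ∀ x ∈ sph n, 0 < suppFn n (Ωseq k) z₁ x :=
      fun x hx => lt_of_lt_of_le (by positivity) (hkpos x hx)
    have hz₁k : z₁ ∈ Ωseq k := mem_of_suppFn_pos hconvk hck hnek hkpos'
    have hptlog : ∀ x ∈ sph n, Real.log (suppFn n Ω₀ z₁ x)
        ≤ Real.log (suppFn n (Ωseq k) z₁ x) + ε/4 := by
      intro x hx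
      have h1 := hnear x hx
      have h2 : Real.log (suppFn n Ω₀ z₁ x) ≤ Real.log (suppFn n (Ωseq k) z₁ x + ε') :=
        Real.log_le_log (hpos₁ x hx) h1
      have h3 := log_add_le (hkpos' x hx) hε'pos.le
      have h4 : ε' / suppFn n (Ωseq k) z₁ x ≤ ε' / (δ/2) :=
        div_le_div_of_nonneg_left hε'pos.le (by positivity) (hkpos x hx)
      have h5 : ε' / (δ/2) ≤ ε/4 := by
        rw [div_le_iff₀ (by positivity : (0:ℝ) < δ/2)]
        calc ε' ≤ δ*ε/8 := hε'δε
        _ = ε/4 * (δ/2) := by ring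
      linarith
    have hint₀ := integrable_log hμ (suppFn_continuous hcomp₀ hne₀ z₁) hpos₁
    have hintk := integrable_log hμ (suppFn_continuous hck hnek z₁) hkpos'
    have hintsum : IntegrableOn (fun x => Real.log (suppFn n (Ωseq k) z₁ x) + ε/4) (sph n)
        (sphMeasure n) := hintk.add hconstint
    have hI := setIntegral_mono_on hint₀ hintsum sph_measurable hptlog
    rw [integral_add hintk hconstint, setIntegral_const, smul_eq_mul, measureReal_def, hmm] at hI
    have hEk : entropyIntegral n (Ωseq k) z₁ ≤ entropy n (Ωseq k) :=
      le_entropy hμ hck hRk hz₁k hkpos'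
    have hstep : entropyIntegral n Ω₀ z₁ ≤ entropyIntegral n (Ωseq k) z₁ + ε/4 := by
      unfold entropyIntegral
      have h6 : (1/omegaN n) * (∫ x in sph n, Real.log (suppFn n Ω₀ z₁ x) ∂(sphMeasure n))
          ≤ (1/omegaN n) * ((∫ x in sph n, Real.log (suppFn n (Ωseq k) z₁ x) ∂(sphMeasure n))
            + omegaN n * (ε/4)) :=
        mul_le_mul_of_nonneg_left hI (by positivity)
      have h7 := one_div_mul_cancel_le hωnn (by positivity : (0:ℝ) ≤ ε/4)
      have h8 : (1/omegaN n) * ((∫ x in sph n, Real.log (suppFn n (Ωseq k) z₁ x)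
            ∂(sphMeasure n)) + omegaN n * (ε/4))
          = (1/omegaN n) * (∫ x in sph n, Real.log (suppFn n (Ωseq k) z₁ x) ∂(sphMeasure n))
            + (1/omegaN n) * (omegaN n * (ε/4)) := by ring
      rw [h8] at h6
      linarith
    linarith
  rw [Real.dist_eq, abs_sub_lt_iff]
  constructor <;> linarith
end
end

section
/- Let Ω be a convex body in ℝ^{n+1} with support function u(x) = max_{z ∈ Ω} ⟨x, z⟩ on 𝕊^n. Then the function F(t) = (1/ω_n) ∫_{𝕊^n} log( u(x) + ⟨t, x⟩ ) dθ(x) is strictly concave on the open convex set of t ∈ ℝ^{n+1} for which u(x) + ⟨t, x⟩ > 0 for all x ∈ 𝕊^n; that is, for distinct t₀, t₁ in this set and 0 < s < 1, F((1−s)t₀ + s t₁) > (1−s)F(t₀) + sF(t₁). -/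
open MeasureTheory Metric Set Filter
open scoped RealInnerProductSpace Topology

set_option maxHeartbeats 1000000
noncomputable section

open scoped NNReal ENNReal

def cap (n : ℕ) (v : Eu n) : Set (Eu n) := {x | x ∈ sph n ∧ (1/2 : ℝ) ≤ ⟪v, x⟫}

lemma sqrt_lipschitz {A B : ℝ} (hA : 1/4 ≤ A) (hB : 1/4 ≤ B) :
    |Real.sqrt A - Real.sqrt B| ≤ |A - B| := by
  have hA0 : (0:ℝ) ≤ A := by linarith
  have hB0 : (0:ℝ) ≤ B := by linarith
  have hsA := Real.sq_sqrt hA0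
  have hsB := Real.sq_sqrt hB0
  have half : (1/2:ℝ) = Real.sqrt (1/4) := by
    rw [show (1/4:ℝ) = (1/2)^2 by norm_num, Real.sqrt_sq (by norm_num)]
  have hA2 : (1/2:ℝ) ≤ Real.sqrt A := by rw [half]; exact Real.sqrt_le_sqrt hA
  have hB2 : (1/2:ℝ) ≤ Real.sqrt B := by rw [half]; exact Real.sqrt_le_sqrt hB
  rcases le_total A B with h | h
  · have hs : Real.sqrt A ≤ Real.sqrt B := Real.sqrt_le_sqrt h
    rw [abs_of_nonpos (by linarith), abs_of_nonpos (by linarith)]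
    nlinarith [mul_nonneg (sub_nonneg.2 hs)
      (by linarith : (0:ℝ) ≤ Real.sqrt A + Real.sqrt B - 1)]
  · have hs : Real.sqrt B ≤ Real.sqrt A := Real.sqrt_le_sqrt h
    rw [abs_of_nonneg (by linarith), abs_of_nonneg (by linarith)]
    nlinarith [mul_nonneg (sub_nonneg.2 hs)
      (by linarith : (0:ℝ) ≤ Real.sqrt A + Real.sqrt B - 1)]

lemma cap_pos (n : ℕ) (v : Eu n) (hv : ‖v‖ = 1) : 0 < μH[(n:ℝ)] (cap n v) := by
  have hv0 : v ≠ 0 := fun h => by simp [h] at hv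
  set W : Submodule ℝ (Eu n) := (ℝ ∙ v)ᗮ with hWdef
  have hfr : Module.finrank ℝ W = n := by
    have h1 : Module.finrank ℝ (ℝ ∙ v) = 1 := finrank_span_singleton hv0
    have h2 := Submodule.finrank_add_finrank_orthogonal (K := (ℝ ∙ v)) (𝕜 := ℝ)
    rw [h1, finrank_euclideanSpace_fin] at h2
    rw [hWdef]
    omega
  haveI : (μH[(n:ℝ)] : Measure W).IsAddHaarMeasure := by
    have h := MeasureTheory.isAddHaarMeasure_hausdorffMeasure (E := W)
    rwa [hfr] at h
  set P : Eu n → Eu n := fun x => x - ⟪v, x⟫ • v with hPdef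
  have hPlip : LipschitzWith 2 P := by
    apply LipschitzWith.of_dist_le_mul
    intro x y
    have hcoe : ((2:ℝ≥0):ℝ) = 2 := by norm_num
    rw [dist_eq_norm, dist_eq_norm, hcoe]
    have hxy : P x - P y = (x - y) - ⟪v, x - y⟫ • v := by
      simp only [hPdef, inner_sub_right, sub_smul]
      abel
    rw [hxy]
    have h1 : ‖(x - y) - ⟪v, x - y⟫ • v‖ ≤ ‖x - y‖ + ‖⟪v, x - y⟫ • v‖ := norm_sub_le _ _
    have h2 : ‖⟪v, x - y⟫ • v‖ ≤ ‖x - y‖ := by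
      rw [norm_smul, hv, mul_one, Real.norm_eq_abs]
      calc |⟪v, x - y⟫| ≤ ‖v‖ * ‖x - y‖ := abs_real_inner_le_norm _ _
        _ = ‖x - y‖ := by rw [hv, one_mul]
    linarith
  have himg : (fun w : W => (w : Eu n)) '' closedBall (0 : W) (1/2) ⊆ P '' cap n v := by
    rintro _ ⟨w, hw, rfl⟩
    rw [mem_closedBall, dist_zero_right] at hw
    have hwv : ⟪v, (w : Eu n)⟫ = 0 :=
      Submodule.mem_orthogonal_singleton_iff_inner_right.1 w.2
    have hwn : ‖(w : Eu n)‖ = ‖w‖ := rfl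
    have hw2 : ‖(w : Eu n)‖^2 ≤ 1/4 := by rw [hwn]; nlinarith [norm_nonneg w]
    set h := Real.sqrt (1 - ‖(w : Eu n)‖^2) with hh
    have half : (1/2:ℝ) = Real.sqrt (1/4) := by
      rw [show (1/4:ℝ) = (1/2)^2 by norm_num, Real.sqrt_sq (by norm_num)]
    have hhpos : (1/2 : ℝ) ≤ h := by
      rw [hh, half]; exact Real.sqrt_le_sqrt (by linarith)
    have hsq : h^2 = 1 - ‖(w : Eu n)‖^2 := Real.sq_sqrt (by nlinarith)
    refine ⟨(w : Eu n) + h • v, ⟨?_, ?_⟩, ?_⟩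
    · have hns : ‖(w : Eu n) + h • v‖^2 = 1 := by
        rw [norm_add_sq_real, real_inner_smul_right, real_inner_comm, hwv, norm_smul, hv]
        simp only [Real.norm_eq_abs, mul_one, mul_zero]
        rw [sq_abs]
        linarith
      have hnn : ‖(w : Eu n) + h • v‖ = 1 := by
        nlinarith [norm_nonneg ((w : Eu n) + h • v)]
      simpa [sph, mem_sphere_iff_norm] using hnn
    · rw [inner_add_right, hwv, real_inner_smul_right, real_inner_self_eq_norm_sq, hv]
      simpa using hhpos
    · simp only [hPdef, inner_add_right, hwv, real_inner_smul_right,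
        real_inner_self_eq_norm_sq, hv]
      simp
  have hball : 0 < (μH[(n:ℝ)] : Measure W) (closedBall (0:W) (1/2)) :=
    lt_of_lt_of_le (measure_ball_pos _ _ (by norm_num)) (measure_mono ball_subset_closedBall)
  have hiso : μH[(n:ℝ)] ((fun w : W => (w : Eu n)) '' closedBall (0 : W) (1/2))
      = (μH[(n:ℝ)] : Measure W) (closedBall (0:W) (1/2)) :=
    isometry_subtype_coe.hausdorffMeasure_image (Or.inl (by positivity)) _
  have hchain : (μH[(n:ℝ)] : Measure W) (closedBall (0:W) (1/2))
      ≤ ((2:ℝ≥0):ℝ≥0∞)^(n:ℝ) * μH[(n:ℝ)] (cap n v) := by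
    calc (μH[(n:ℝ)] : Measure W) (closedBall (0:W) (1/2))
        = μH[(n:ℝ)] ((fun w : W => (w : Eu n)) '' closedBall (0 : W) (1/2)) := hiso.symm
      _ ≤ μH[(n:ℝ)] (P '' cap n v) := measure_mono himg
      _ ≤ ((2:ℝ≥0):ℝ≥0∞)^(n:ℝ) * μH[(n:ℝ)] (cap n v) :=
          hPlip.hausdorffMeasure_image_le (by positivity) _
  by_contra hcon
  push_neg at hcon
  have hz : μH[(n:ℝ)] (cap n v) = 0 := le_antisymm hcon zero_le
  rw [hz, mul_zero] at hchain
  exact absurd (lt_of_lt_of_le hball hchain) (lt_irrefl 0)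

lemma cap_finite (n : ℕ) (v : Eu n) (hv : ‖v‖ = 1) : μH[(n:ℝ)] (cap n v) < ⊤ := by
  have hv0 : v ≠ 0 := fun h => by simp [h] at hv
  set W : Submodule ℝ (Eu n) := (ℝ ∙ v)ᗮ with hWdef
  have hfr : Module.finrank ℝ W = n := by
    have h1 : Module.finrank ℝ (ℝ ∙ v) = 1 := finrank_span_singleton hv0
    have h2 := Submodule.finrank_add_finrank_orthogonal (K := (ℝ ∙ v)) (𝕜 := ℝ)
    rw [h1, finrank_euclideanSpace_fin] at h2
    rw [hWdef]
    omega
  haveI : (μH[(n:ℝ)] : Measure W).IsAddHaarMeasure := by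
    have h := MeasureTheory.isAddHaarMeasure_hausdorffMeasure (E := W)
    rwa [hfr] at h
  set f : W → Eu n := fun w => (w : Eu n) + Real.sqrt (1 - ‖(w : Eu n)‖^2) • v with hfdef
  set D : Set W := {w : W | ‖w‖^2 ≤ 3/4} with hDdef
  have hDsub : D ⊆ closedBall (0:W) 1 := by
    intro w hw
    rw [mem_closedBall, dist_zero_right]
    have hw' : ‖w‖^2 ≤ 3/4 := hw
    nlinarith [norm_nonneg w]
  have hlip : LipschitzOnWith 3 f D := by
    apply LipschitzOnWith.of_dist_le_mul
    intro w hw w' hw'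
    have hcoe : ((3:ℝ≥0):ℝ) = 3 := by norm_num
    rw [dist_eq_norm, dist_eq_norm, hcoe]
    have hwd : ‖w - w'‖ = ‖(w : Eu n) - (w' : Eu n)‖ := rfl
    set a := ‖(w : Eu n)‖ with ha
    set b := ‖(w' : Eu n)‖ with hb
    have haw : a = ‖w‖ := rfl
    have hbw : b = ‖w'‖ := rfl
    have ha34 : a^2 ≤ 3/4 := by rw [haw]; exact hw
    have hb34 : b^2 ≤ 3/4 := by rw [hbw]; exact hw'
    have habd : |a - b| ≤ ‖(w : Eu n) - (w' : Eu n)‖ := abs_norm_sub_norm_le _ _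
    have ha0 : 0 ≤ a := norm_nonneg _
    have hb0 : 0 ≤ b := norm_nonneg _
    have ha1 : a ≤ 1 := by nlinarith
    have hb1 : b ≤ 1 := by nlinarith
    have hfsub : f w - f w' = ((w : Eu n) - (w' : Eu n))
        + (Real.sqrt (1 - a^2) - Real.sqrt (1 - b^2)) • v := by
      simp only [hfdef, sub_smul, ← ha, ← hb]
      abel
    rw [hfsub]
    have h1 : ‖((w : Eu n) - (w' : Eu n)) + (Real.sqrt (1 - a^2) - Real.sqrt (1 - b^2)) • v‖
        ≤ ‖(w : Eu n) - (w' : Eu n)‖ + |Real.sqrt (1 - a^2) - Real.sqrt (1 - b^2)| := by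
      calc _ ≤ ‖(w : Eu n) - (w' : Eu n)‖ + ‖(Real.sqrt (1 - a^2) - Real.sqrt (1 - b^2)) • v‖ :=
            norm_add_le _ _
        _ = _ := by rw [norm_smul, hv, mul_one, Real.norm_eq_abs]
    have h2 : |Real.sqrt (1 - a^2) - Real.sqrt (1 - b^2)| ≤ |(1 - a^2) - (1 - b^2)| :=
      sqrt_lipschitz (by nlinarith) (by nlinarith)
    have h3 : |(1 - a^2) - (1 - b^2)| ≤ 2 * ‖(w : Eu n) - (w' : Eu n)‖ := by
      have he : (1 - a^2) - (1 - b^2) = (b - a) * (b + a) := by ring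
      rw [he, abs_mul, abs_of_nonneg (by linarith : (0:ℝ) ≤ b + a), abs_sub_comm]
      calc |a - b| * (b + a) ≤ ‖(w : Eu n) - (w' : Eu n)‖ * 2 := by
            apply mul_le_mul habd (by linarith) (by linarith) (norm_nonneg _)
        _ = 2 * ‖(w : Eu n) - (w' : Eu n)‖ := mul_comm _ _
    rw [hwd]
    linarith
  have hcapsub : cap n v ⊆ f '' D := by
    rintro x ⟨hxs, hxv⟩
    have hx1 : ‖x‖ = 1 := by
      simpa [sph, mem_sphere_iff_norm] using hxs
    set c := ⟪v, x⟫ with hc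
    have hc0 : (0:ℝ) ≤ c := by linarith
    have hmem : x - c • v ∈ W := by
      apply Submodule.mem_orthogonal_singleton_iff_inner_right.2
      rw [inner_sub_right, real_inner_smul_right, real_inner_self_eq_norm_sq, hv]
      simp [hc]
    refine ⟨⟨x - c • v, hmem⟩, ?_, ?_⟩
    · have hn2 : ‖x - c • v‖^2 = 1 - c^2 := by
        have hcx : ⟪x, v⟫ = c := (real_inner_comm v x).trans hc.symm
        rw [norm_sub_sq_real, real_inner_smul_right, norm_smul, hv]
        simp only [Real.norm_eq_abs, mul_one]
        rw [sq_abs, hx1]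
        linear_combination (-2*c) * hcx
      have : ‖(⟨x - c • v, hmem⟩ : W)‖^2 = 1 - c^2 := hn2
      rw [hDdef, mem_setOf_eq, this]
      nlinarith
    · have hcn : ‖((⟨x - c • v, hmem⟩ : W) : Eu n)‖^2 = 1 - c^2 := by
        show ‖x - c • v‖^2 = 1 - c^2
        have hcx : ⟪x, v⟫ = c := (real_inner_comm v x).trans hc.symm
        rw [norm_sub_sq_real, real_inner_smul_right, norm_smul, hv]
        simp only [Real.norm_eq_abs, mul_one]
        rw [sq_abs, hx1]
        linear_combination (-2*c) * hcx
      simp only [hfdef]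
      rw [hcn]
      have : Real.sqrt (1 - (1 - c^2)) = c := by
        rw [show (1 - (1 - c^2) : ℝ) = c^2 by ring, Real.sqrt_sq hc0]
      rw [this]
      show x - c • v + c • v = x
      abel
  calc μH[(n:ℝ)] (cap n v) ≤ μH[(n:ℝ)] (f '' D) := measure_mono hcapsub
    _ ≤ ((3:ℝ≥0):ℝ≥0∞)^(n:ℝ) * (μH[(n:ℝ)] : Measure W) D :=
        hlip.hausdorffMeasure_image_le (by positivity)
    _ ≤ ((3:ℝ≥0):ℝ≥0∞)^(n:ℝ) * (μH[(n:ℝ)] : Measure W) (closedBall (0:W) 1) := by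
        gcongr
        
    _ < ⊤ := ENNReal.mul_lt_top
        (ENNReal.rpow_lt_top_of_nonneg (Nat.cast_nonneg n) ENNReal.coe_ne_top)
        ((isCompact_closedBall _ _).measure_lt_top)

lemma sph_finite (n : ℕ) : μH[(n:ℝ)] (sph n) < ⊤ := by
  have hcov : sphere (0 : Eu n) 1 ⊆ ⋃ v ∈ sph n, {y : Eu n | (1/2:ℝ) < ⟪v, y⟫} := by
    intro x hx
    rw [mem_iUnion₂]
    refine ⟨x, hx, ?_⟩
    have hx1 : ‖x‖ = 1 := by simpa [sph, mem_sphere_iff_norm] using hx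
    simp only [mem_setOf_eq]
    rw [real_inner_self_eq_norm_sq, hx1]
    norm_num
  obtain ⟨b, hbsub, hbfin, hcover⟩ :=
    (isCompact_sphere (0 : Eu n) 1).elim_finite_subcover_image
      (b := sph n) (c := fun v => {y : Eu n | (1/2:ℝ) < ⟪v, y⟫})
      (fun v _ => isOpen_lt continuous_const (continuous_const.inner continuous_id))
      hcov
  have hsub : sph n ⊆ ⋃ v ∈ b, cap n v := by
    intro x hx
    have hx' := hcover (show x ∈ sphere (0:Eu n) 1 from hx)
    rw [mem_iUnion₂] at hx' ⊢
    obtain ⟨v, hvb, hvx⟩ := hx'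
    exact ⟨v, hvb, hx, le_of_lt hvx⟩
  refine lt_of_le_of_lt (measure_mono hsub) (measure_biUnion_lt_top hbfin fun v hvb => ?_)
  exact cap_finite n v (by simpa [sph, mem_sphere_iff_norm] using hbsub hvb)

-- STATEMENT 19
theorem strict_concavity_F (n : ℕ) (hn : 1 ≤ n) (Ω : Set (Eu n))
    (hΩ : IsConvexBody n Ω) (t₀ t₁ : Eu n)
    (h₀ : ∀ x ∈ sph n, 0 < suppFn n Ω 0 x + ⟪t₀, x⟫)
    (h₁ : ∀ x ∈ sph n, 0 < suppFn n Ω 0 x + ⟪t₁, x⟫)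
    (hne : t₀ ≠ t₁) (s : ℝ) (hs0 : 0 < s) (hs1 : s < 1) :
    (1 - s) * ((1 / omegaN n) *
        ∫ x in sph n, Real.log (suppFn n Ω 0 x + ⟪t₀, x⟫) ∂(sphMeasure n)) +
      s * ((1 / omegaN n) *
        ∫ x in sph n, Real.log (suppFn n Ω 0 x + ⟪t₁, x⟫) ∂(sphMeasure n)) <
    (1 / omegaN n) *
      ∫ x in sph n,
        Real.log (suppFn n Ω 0 x + ⟪(1 - s) • t₀ + s • t₁, x⟫) ∂(sphMeasure n) := by
  classical
  set u : Eu n → ℝ := suppFn n Ω 0 with hu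
  obtain ⟨hconv, hcomp, hint⟩ := hΩ
  have hΩne : Ω.Nonempty := hint.mono interior_subset
  obtain ⟨R, hR⟩ := hcomp.isBounded.exists_norm_le
  have hR0 : 0 ≤ R := le_trans (norm_nonneg _) (hR _ hΩne.choose_spec)
  have hbdd : ∀ x : Eu n, BddAbove ((fun z => ⟪x, z - 0⟫) '' Ω) := fun x =>
    (hcomp.image (continuous_const.inner (continuous_id.sub continuous_const))).bddAbove
  have hus : ∀ x, u x = sSup ((fun z => ⟪x, z - 0⟫) '' Ω) := fun _ => rfl
  have hle : ∀ x y : Eu n, u x ≤ u y + R * ‖x - y‖ := by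
    intro x y
    rw [hus x]
    apply csSup_le (hΩne.image _)
    rintro r ⟨z, hz, rfl⟩
    have h1 : ⟪y, z - 0⟫ ≤ u y := by
      rw [hus y]; exact le_csSup (hbdd y) (mem_image_of_mem _ hz)
    have h2 : ⟪x - y, z - 0⟫ ≤ ‖x - y‖ * ‖z - 0‖ := real_inner_le_norm _ _
    have h3 : ‖z - 0‖ ≤ R := by simpa using hR z hz
    have h4 : ⟪x, z - 0⟫ = ⟪y, z - 0⟫ + ⟪x - y, z - 0⟫ := by
      rw [← inner_add_left]
      congr 1
      abel
    have h5 : ‖x - y‖ * ‖z - 0‖ ≤ R * ‖x - y‖ := by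
      calc ‖x - y‖ * ‖z - 0‖ ≤ ‖x - y‖ * R := by gcongr
        _ = R * ‖x - y‖ := mul_comm _ _
    linarith
  have hucont : Continuous u := by
    have hlw : LipschitzWith (Real.toNNReal R) u := by
      apply LipschitzWith.of_dist_le_mul
      intro x y
      rw [dist_eq_norm, dist_eq_norm, Real.coe_toNNReal R hR0, Real.norm_eq_abs]
      have h1 := hle x y
      have h2 : u y ≤ u x + R * ‖x - y‖ := by
        have := hle y x
        rwa [norm_sub_rev] at this
      rw [abs_sub_le_iff]
      constructor <;> linarith
    exact hlw.continuous
  have hargcont : ∀ t : Eu n, Continuous (fun x => u x + ⟪t, x⟫) := fun t =>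
    hucont.add (continuous_const.inner continuous_id)
  have hsphm : MeasurableSet (sph n) := isClosed_sphere.measurableSet
  have hsphfin : sphMeasure n (sph n) ≠ ⊤ := (sph_finite n).ne
  have hinteg : ∀ t : Eu n, (∀ x ∈ sph n, 0 < u x + ⟪t, x⟫) →
      IntegrableOn (fun x => Real.log (u x + ⟪t, x⟫)) (sph n) (sphMeasure n) := by
    intro t ht
    have hcont : ContinuousOn (fun x => Real.log (u x + ⟪t, x⟫)) (sph n) :=
      ContinuousOn.log (hargcont t).continuousOn (fun x hx => (ht x hx).ne')
    obtain ⟨C, hC⟩ := (isCompact_sphere (0:Eu n) 1).exists_bound_of_continuousOn hcont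
    exact Measure.integrableOn_of_bounded hsphfin
      ((Real.measurable_log.comp (hargcont t).measurable).aestronglyMeasurable)
      (ae_restrict_of_forall_mem hsphm hC)
  set ts : Eu n := (1 - s) • t₀ + s • t₁ with hts
  have hcomb : ∀ x : Eu n, u x + ⟪ts, x⟫
      = (1 - s) * (u x + ⟪t₀, x⟫) + s * (u x + ⟪t₁, x⟫) := by
    intro x
    rw [hts, inner_add_left, real_inner_smul_left, real_inner_smul_left]
    ring
  have hc : ∀ x ∈ sph n, 0 < u x + ⟪ts, x⟫ := by
    intro x hx
    rw [hcomb x]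
    have ha := h₀ x hx
    have hb := h₁ x hx
    nlinarith
  have hwk : ∀ x ∈ sph n,
      (1-s) * Real.log (u x + ⟪t₀, x⟫) + s * Real.log (u x + ⟪t₁, x⟫)
        ≤ Real.log (u x + ⟪ts, x⟫) := by
    intro x hx
    rw [hcomb x]
    have h := strictConcaveOn_log_Ioi.concaveOn.2 (mem_Ioi.2 (h₀ x hx)) (mem_Ioi.2 (h₁ x hx))
      (by linarith : (0:ℝ) ≤ 1 - s) (le_of_lt hs0) (by ring)
    simpa [smul_eq_mul] using h
  have hst : ∀ x ∈ sph n, ⟪t₁ - t₀, x⟫ ≠ 0 →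
      (1-s) * Real.log (u x + ⟪t₀, x⟫) + s * Real.log (u x + ⟪t₁, x⟫)
        < Real.log (u x + ⟪ts, x⟫) := by
    intro x hx hne0
    rw [hcomb x]
    have hab : (u x + ⟪t₀, x⟫) ≠ (u x + ⟪t₁, x⟫) := by
      intro h
      apply hne0
      rw [inner_sub_left]
      have := add_left_cancel h
      linarith
    have h := strictConcaveOn_log_Ioi.2 (mem_Ioi.2 (h₀ x hx)) (mem_Ioi.2 (h₁ x hx)) hab
      (by linarith : (0:ℝ) < 1 - s) hs0 (by ring)
    simpa [smul_eq_mul] using h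
  set g₀ : Eu n → ℝ := fun x => Real.log (u x + ⟪t₀, x⟫) with hg₀
  set g₁ : Eu n → ℝ := fun x => Real.log (u x + ⟪t₁, x⟫) with hg₁
  set gc : Eu n → ℝ := fun x => Real.log (u x + ⟪ts, x⟫) with hgc
  have hI0 := hinteg t₀ h₀
  have hI1 := hinteg t₁ h₁
  have hIc := hinteg ts hc
  have hI0' : IntegrableOn (fun x => (1-s) * g₀ x) (sph n) (sphMeasure n) := hI0.const_mul _
  have hI1' : IntegrableOn (fun x => s * g₁ x) (sph n) (sphMeasure n) := hI1.const_mul _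
  set φ : Eu n → ℝ := fun x => gc x - ((1-s) * g₀ x + s * g₁ x) with hφ
  have hIφ : IntegrableOn φ (sph n) (sphMeasure n) := hIc.sub (hI0'.add hI1')
  have hφpos : 0 < ∫ x in sph n, φ x ∂(sphMeasure n) := by
    rw [MeasureTheory.setIntegral_pos_iff_support_of_nonneg_ae
      (ae_restrict_of_forall_mem hsphm fun x hx => sub_nonneg.2 (hwk x hx)) hIφ]
    set v : Eu n := ‖t₁ - t₀‖⁻¹ • (t₁ - t₀) with hvdef
    have ht10 : t₁ - t₀ ≠ 0 := sub_ne_zero.2 (Ne.symm hne)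
    have hvnorm : ‖v‖ = 1 := norm_smul_inv_norm ht10
    refine lt_of_lt_of_le (cap_pos n v hvnorm) (measure_mono ?_)
    rintro x ⟨hxs, hxv⟩
    refine ⟨?_, hxs⟩
    have hx0 : ⟪t₁ - t₀, x⟫ ≠ 0 := by
      intro h
      rw [hvdef, real_inner_smul_left, h, mul_zero] at hxv
      norm_num at hxv
    exact (sub_pos.2 (hst x hxs hx0)).ne'
  have hsplit : ∫ x in sph n, φ x ∂(sphMeasure n)
      = (∫ x in sph n, gc x ∂(sphMeasure n))
        - ((1-s) * ∫ x in sph n, g₀ x ∂(sphMeasure n)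
          + s * ∫ x in sph n, g₁ x ∂(sphMeasure n)) := by
    have hIsum : IntegrableOn (fun x => (1-s) * g₀ x + s * g₁ x) (sph n) (sphMeasure n) :=
      hI0'.add hI1'
    rw [integral_sub hIc hIsum, integral_add hI0' hI1',
      integral_const_mul, integral_const_mul]
  have hlt : (1-s) * ∫ x in sph n, g₀ x ∂(sphMeasure n)
      + s * ∫ x in sph n, g₁ x ∂(sphMeasure n)
      < ∫ x in sph n, gc x ∂(sphMeasure n) := by
    rw [hsplit] at hφpos
    linarith
  have homega : 0 < omegaN n := by
    apply ENNReal.toReal_pos ?_ hsphfin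
    have hvn : ‖(EuclideanSpace.single (0 : Fin (n+1)) (1:ℝ) : Eu n)‖ = 1 := by
      simp [EuclideanSpace.norm_single]
    exact (lt_of_lt_of_le (cap_pos n _ hvn) (measure_mono fun x hx => hx.1)).ne'
  calc (1 - s) * ((1 / omegaN n) * ∫ x in sph n, g₀ x ∂(sphMeasure n))
        + s * ((1 / omegaN n) * ∫ x in sph n, g₁ x ∂(sphMeasure n))
      = (1 / omegaN n) * ((1-s) * ∫ x in sph n, g₀ x ∂(sphMeasure n)
          + s * ∫ x in sph n, g₁ x ∂(sphMeasure n)) := by ring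
    _ < (1 / omegaN n) * ∫ x in sph n, gc x ∂(sphMeasure n) :=
        mul_lt_mul_of_pos_left hlt (div_pos one_pos homega)
end
end
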